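/- Let R = ℂ[x,y,t]/(t² − f) where f ∈ ℂ[x,y], and let f₁, f₂ ∈ ℂ[x,y] with f ∈ (f₁, f₂) in ℂ[x,y]. Let I₁ = (f₁, f₂) and I₂ = (f₁, f₂, t) as ideals of R. Then the colon ideal [I₁ : I₂] equals (f₁, f₂, t). -/

import Mathlib

set_option synthInstance.maxHeartbeats 800000
set_option maxHeartbeats 1600000
open Polynomial

/-- Let `R = ℂ[x,y][t]/(t² - f)` and `f ∈ (f₁, f₂)` in `ℂ[x,y]`.  With
`I₁ = (f₁, f₂)` and `I₂ = (f₁, f₂, t)` as ideals of `R`, the colon ideal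
`[I₁ : I₂]` equals `(f₁, f₂, t)`. -/
theorem stmt_1 (f f₁ f₂ : MvPolynomial (Fin 2) ℂ)
    (hf : f ∈ Ideal.span ({f₁, f₂} : Set (MvPolynomial (Fin 2) ℂ)))
    (J : Ideal (Polynomial (MvPolynomial (Fin 2) ℂ)))
    (hJ : J = Ideal.span {(X : Polynomial (MvPolynomial (Fin 2) ℂ)) ^ 2 - Polynomial.C f})
    (I₁ I₂ : Ideal (Polynomial (MvPolynomial (Fin 2) ℂ) ⧸ J))
    (hI₁ : I₁ = Ideal.span {Ideal.Quotient.mk J (Polynomial.C f₁),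
        Ideal.Quotient.mk J (Polynomial.C f₂)})
    (hI₂ : I₂ = Ideal.span {Ideal.Quotient.mk J (Polynomial.C f₁),
        Ideal.Quotient.mk J (Polynomial.C f₂), Ideal.Quotient.mk J X}) :
    I₁.colon I₂ = I₂ := by
  have hts : ∀ I : Ideal (Polynomial (MvPolynomial (Fin 2) ℂ) ⧸ J), I.IsTwoSided :=
    fun I => ⟨fun b ha => mul_comm b _ ▸ I.smul_mem _ ha⟩
  have hf1I₁ : Ideal.Quotient.mk J (C f₁) ∈ I₁ := by
    rw [hI₁]; exact Ideal.subset_span (by simp)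
  have hf2I₁ : Ideal.Quotient.mk J (C f₂) ∈ I₁ := by
    rw [hI₁]; exact Ideal.subset_span (by simp)
  have hXI₂ : Ideal.Quotient.mk J X ∈ I₂ := by
    rw [hI₂]; exact Ideal.subset_span (by simp)
  have hf1I₂ : Ideal.Quotient.mk J (C f₁) ∈ I₂ := by
    rw [hI₂]; exact Ideal.subset_span (by simp)
  have hf2I₂ : Ideal.Quotient.mk J (C f₂) ∈ I₂ := by
    rw [hI₂]; exact Ideal.subset_span (by simp)
  -- constants from (f₁,f₂) land in I₁ (hence in I₂)
  have hCI₁ : ∀ g : MvPolynomial (Fin 2) ℂ, g ∈ Ideal.span ({f₁, f₂} : Set _) →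
      Ideal.Quotient.mk J (C g) ∈ I₁ := by
    intro g hg
    obtain ⟨c, d, hcd⟩ := Ideal.mem_span_pair.mp hg
    have : (C g : Polynomial (MvPolynomial (Fin 2) ℂ)) = C c * C f₁ + C d * C f₂ := by
      rw [← hcd]; simp
    rw [this, map_add, map_mul, map_mul]
    exact add_mem (Ideal.mul_mem_left _ _ hf1I₁) (Ideal.mul_mem_left _ _ hf2I₁)
  have hXX : Ideal.Quotient.mk J X * Ideal.Quotient.mk J X = Ideal.Quotient.mk J (C f) := by
    rw [← map_mul, Ideal.Quotient.eq]
    have : (X * X : Polynomial (MvPolynomial (Fin 2) ℂ)) - C f = X ^ 2 - C f := by ring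
    rw [this, hJ]
    exact Ideal.subset_span rfl
  have hI₁leI₂ : I₁ ≤ I₂ := by
    rw [hI₁, Ideal.span_le]
    rintro z hz
    rcases hz with h | h
    · exact h ▸ hf1I₂
    · exact (Set.mem_singleton_iff.mp h) ▸ hf2I₂
  refine le_antisymm ?_ ?_
  · -- colon ≤ I₂
    intro r hr
    have hrt : r * Ideal.Quotient.mk J X ∈ I₁ := by
      have := Submodule.mem_colon.mp hr _ hXI₂
      simpa [smul_eq_mul] using this
    obtain ⟨p, rfl⟩ := Ideal.Quotient.mk_surjective r
    have hI₁' : I₁ = Ideal.map (Ideal.Quotient.mk J)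
        (Ideal.span ({C f₁, C f₂} : Set (Polynomial (MvPolynomial (Fin 2) ℂ)))) := by
      rw [hI₁, Ideal.map_span, Set.image_insert_eq, Set.image_singleton]
    have hmem : p * X ∈
        Ideal.span ({C f₁, C f₂} : Set (Polynomial (MvPolynomial (Fin 2) ℂ))) ⊔ J := by
      have h1 : Ideal.Quotient.mk J (p * X) ∈ I₁ := by rw [map_mul]; exact hrt
      rw [hI₁'] at h1
      have h2 : p * X ∈ Ideal.comap (Ideal.Quotient.mk J)
          (Ideal.map (Ideal.Quotient.mk J)
            (Ideal.span ({C f₁, C f₂} : Set (Polynomial (MvPolynomial (Fin 2) ℂ))))) :=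
        Ideal.mem_comap.mpr h1
      rwa [Ideal.comap_map_of_surjective _ Ideal.Quotient.mk_surjective,
        ← RingHom.ker_eq_comap_bot, Ideal.mk_ker] at h2
    obtain ⟨u, hu, v, hv, huv⟩ := Submodule.mem_sup.mp hmem
    obtain ⟨a, b, rfl⟩ := Ideal.mem_span_pair.mp hu
    rw [hJ] at hv
    obtain ⟨w, rfl⟩ := Ideal.mem_span_singleton'.mp hv
    -- take the coefficient of X in the identity
    have hcoeff : p.coeff 0 = a.coeff 1 * f₁ + b.coeff 1 * f₂ - w.coeff 1 * f := by
      have h1 := congrArg (fun q : Polynomial (MvPolynomial (Fin 2) ℂ) => q.coeff 1) huv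
      have e1 : (p * X).coeff 1 = p.coeff 0 := by
        have := Polynomial.coeff_mul_X p 0
        simpa using this
      have e2 : (a * C f₁).coeff 1 = a.coeff 1 * f₁ := Polynomial.coeff_mul_C _ _ _
      have e3 : (b * C f₂).coeff 1 = b.coeff 1 * f₂ := Polynomial.coeff_mul_C _ _ _
      have e4 : (w * (X ^ 2 - C f)).coeff 1 = -(w.coeff 1 * f) := by
        have hx2 : w * (X ^ 2 - C f) = w * X * X - w * C f := by ring
        rw [hx2, Polynomial.coeff_sub]
        have e5 : (w * X * X).coeff 1 = (w * X).coeff 0 := by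
          have := Polynomial.coeff_mul_X (w * X) 0
          simpa using this
        rw [e5, Polynomial.mul_coeff_zero, Polynomial.coeff_X_zero, mul_zero,
          Polynomial.coeff_mul_C, zero_sub]
      rw [Polynomial.coeff_add, Polynomial.coeff_add, e1, e2, e3, e4] at h1
      rw [← h1]; ring
    have hc0 : p.coeff 0 ∈ Ideal.span ({f₁, f₂} : Set (MvPolynomial (Fin 2) ℂ)) := by
      rw [hcoeff]
      refine sub_mem (add_mem ?_ ?_) ?_
      · exact Ideal.mul_mem_left _ _ (Ideal.subset_span (by simp))
      · exact Ideal.mul_mem_left _ _ (Ideal.subset_span (by simp))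
      · exact Ideal.mul_mem_left _ _ hf
    -- decompose p = X * divX p + C (p.coeff 0)
    have hp : Ideal.Quotient.mk J p = Ideal.Quotient.mk J X * Ideal.Quotient.mk J p.divX
        + Ideal.Quotient.mk J (C (p.coeff 0)) := by
      rw [← map_mul, ← map_add, Polynomial.X_mul_divX_add]
    rw [hp]
    exact add_mem (Ideal.mul_mem_right _ _ hXI₂) (hI₁leI₂ (hCI₁ _ hc0))
  · -- I₂ ≤ colon
    intro r hr
    rw [Submodule.mem_colon]
    intro s hs
    rw [smul_eq_mul]
    -- show I₂ * I₂ ≤ I₁, by generators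
    have key : I₂ * I₂ ≤ I₁ := by
      rw [hI₂, Ideal.span_mul_span, Ideal.span_le]
      rintro z hz
      simp only [Set.mem_mul, Set.mem_iUnion, Set.mem_singleton_iff, exists_prop,
        Set.mem_insert_iff] at hz
      obtain ⟨x, hx, y, hy, rfl⟩ := hz
      rcases hx with h | h | h
      · exact Ideal.mul_mem_right _ _ (h ▸ hf1I₁)
      · exact Ideal.mul_mem_right _ _ (h ▸ hf2I₁)
      · rcases hy with h' | h' | h'
        · exact Ideal.mul_mem_left _ _ (h' ▸ hf1I₁)
        · exact Ideal.mul_mem_left _ _ (h' ▸ hf2I₁)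
        · rw [h, h', hXX]
          exact hCI₁ _ hf
    exact key (Ideal.mul_mem_mul hr hs)
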